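/- (Lemma: Inverse of E.) The delocalization operator E is invertible on integrable functions, with inverse given by the explicit operator E⁻¹: for every integrable h : α → ℝ and every x ∈ α one has E(E⁻¹ h)(x) = h(x) and E⁻¹(E h)(x) = h(x). -/

import Mathlib

open MeasureTheory

/-- Total (coordinate) volume `V := μ(α)` as a real number. -/
noncomputable def totalVol {α : Type*} [MeasurableSpace α] (μ : Measure α) : ℝ :=
  (μ Set.univ).toReal

/-- Spatial average `⟨f⟩ := (1/V) ∫ f dμ`. -/
noncomputable def avg {α : Type*} [MeasurableSpace α] (μ : Measure α) (f : α → ℝ) : ℝ :=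
  (totalVol μ)⁻¹ * ∫ x, f x ∂μ

/-- The delocalization operator `E`:
`(E g)(x) = g(x) + ⟨g⟩ − W(x)⁻¹ ⟨W·g⟩`. -/
noncomputable def opE {α : Type*} [MeasurableSpace α] (μ : Measure α) (W : α → ℝ)
    (g : α → ℝ) : α → ℝ :=
  fun x => g x + avg μ g - (W x)⁻¹ * avg μ (fun y => W y * g y)

/-- The operator `E⁻¹`:
`(E⁻¹ h)(x) = h(x) − W(x)⁻¹ (∫h)/(∫W⁻¹) − (∫W·h)/(∫W) + 2 W(x)⁻¹ V (∫W·h)/((∫W⁻¹)(∫W))`. -/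
noncomputable def opEinv {α : Type*} [MeasurableSpace α] (μ : Measure α) (W : α → ℝ)
    (h : α → ℝ) : α → ℝ :=
  fun x => h x
    - (W x)⁻¹ * (∫ y, h y ∂μ) / (∫ y, (W y)⁻¹ ∂μ)
    - (∫ y, W y * h y ∂μ) / (∫ y, W y ∂μ)
    + 2 * (W x)⁻¹ * totalVol μ * (∫ y, W y * h y ∂μ)
        / ((∫ y, (W y)⁻¹ ∂μ) * (∫ y, W y ∂μ))

/-- The projector-type operator `G₊`:
`(G₊ h)(x) = W(x)·h(x) − W(x)·(∫W·h)/(∫W)`. -/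
noncomputable def opGplus {α : Type*} [MeasurableSpace α] (μ : Measure α) (W : α → ℝ)
    (h : α → ℝ) : α → ℝ :=
  fun x => W x * h x - W x * (∫ y, W y * h y ∂μ) / (∫ y, W y ∂μ)

/-- The projector-type operator `G₋`:
`(G₋ h)(x) = W(x)⁻¹·h(x) − W(x)⁻¹·(∫W⁻¹·h)/(∫W⁻¹)`. -/
noncomputable def opGminus {α : Type*} [MeasurableSpace α] (μ : Measure α) (W : α → ℝ)
    (h : α → ℝ) : α → ℝ :=
  fun x => (W x)⁻¹ * h x - (W x)⁻¹ * (∫ y, (W y)⁻¹ * h y ∂μ) / (∫ y, (W y)⁻¹ ∂μ)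

private lemma alg1 (V A B I J w hx : ℝ) (hV : V ≠ 0) (hA : A ≠ 0) (hB : B ≠ 0)
    (hw : w ≠ 0) :
    (hx + (2 * V * J / (A * B) - I / A) * w⁻¹ + (-(J / B)))
      + V⁻¹ * (I + (2 * V * J / (A * B) - I / A) * A + (-(J / B)) * V)
      - w⁻¹ * (V⁻¹ * (J + (2 * V * J / (A * B) - I / A) * V + (-(J / B)) * B)) = hx := by
  field_simp
  ring

private lemma alg2 (V A B I J w hx : ℝ) (hV : V ≠ 0) (hA : A ≠ 0) (hB : B ≠ 0)
    (hw : w ≠ 0) :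
    (hx + (-(V⁻¹ * J)) * w⁻¹ + V⁻¹ * I)
      - w⁻¹ * (I + (-(V⁻¹ * J)) * A + (V⁻¹ * I) * V) / A
      - (J + (-(V⁻¹ * J)) * V + (V⁻¹ * I) * B) / B
      + 2 * w⁻¹ * V * (J + (-(V⁻¹ * J)) * V + (V⁻¹ * I) * B) / (A * B) = hx := by
  field_simp
  ring

/-- Lemma: Inverse of `E`. The delocalization operator `E` is invertible
on integrable functions, with inverse given by the explicit operator `E⁻¹`:
for every integrable `h` and every `x`, `E(E⁻¹ h)(x) = h(x)` and `E⁻¹(E h)(x) = h(x)`. -/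
theorem opE_inverse
    {α : Type*} [MeasurableSpace α] (μ : Measure α) [IsFiniteMeasure μ]
    (hV : 0 < totalVol μ)
    (W : α → ℝ) (hW : Measurable W)
    (c C : ℝ) (hc : 0 < c) (hcC : c ≤ C)
    (hbound : ∀ x, c ≤ W x ∧ W x ≤ C) :
    ∀ h : α → ℝ, Integrable h μ → ∀ x,
      opE μ W (opEinv μ W h) x = h x ∧ opEinv μ W (opE μ W h) x = h x := by
  intro h hh x
  have hWpos : ∀ y, 0 < W y := fun y => lt_of_lt_of_le hc (hbound y).1
  have hWne : ∀ y, W y ≠ 0 := fun y => (hWpos y).ne'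
  have hCpos : 0 < C := lt_of_lt_of_le hc hcC
  have hVne : totalVol μ ≠ 0 := hV.ne'
  -- integrability facts
  have intW : Integrable W μ := by
    refine (integrable_const C).mono' hW.aestronglyMeasurable ?_
    filter_upwards with y
    rw [Real.norm_eq_abs, abs_of_pos (hWpos y)]
    exact (hbound y).2
  have intWinv : Integrable (fun y => (W y)⁻¹) μ := by
    refine (integrable_const c⁻¹).mono' hW.inv.aestronglyMeasurable ?_
    filter_upwards with y
    rw [Real.norm_eq_abs, abs_of_pos (inv_pos.2 (hWpos y))]
    exact inv_anti₀ hc (hbound y).1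
  have intWh : Integrable (fun y => W y * h y) μ := by
    refine hh.bdd_mul (c := C) hW.aestronglyMeasurable (Filter.Eventually.of_forall fun y => ?_)
    rw [Real.norm_eq_abs, abs_of_pos (hWpos y)]
    exact (hbound y).2
  -- positivity of the integral denominators
  have hconstint : ∀ k : ℝ, ∫ _, k ∂μ = totalVol μ * k := by
    intro k; rw [integral_const]; rfl
  have hA : (0:ℝ) < ∫ y, (W y)⁻¹ ∂μ := by
    have h1 : (0:ℝ) < totalVol μ * C⁻¹ := mul_pos hV (inv_pos.2 hCpos)
    have h2 : ∫ _, C⁻¹ ∂μ ≤ ∫ y, (W y)⁻¹ ∂μ := by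
      refine integral_mono (integrable_const _) intWinv fun y => ?_
      exact inv_anti₀ (hWpos y) (hbound y).2
    rw [hconstint] at h2
    exact lt_of_lt_of_le h1 h2
  have hB : (0:ℝ) < ∫ y, W y ∂μ := by
    have h1 : (0:ℝ) < totalVol μ * c := mul_pos hV hc
    have h2 : ∫ _, c ∂μ ≤ ∫ y, W y ∂μ := by
      refine integral_mono (integrable_const _) intW fun y => (hbound y).1
    rw [hconstint] at h2
    exact lt_of_lt_of_le h1 h2
  have hAne := hA.ne'
  have hBne := hB.ne'
  have hAne' : (∫ y, 1 / W y ∂μ) ≠ 0 := by simpa [one_div] using hAne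
  -- key integral computations for functions of the form h + a·W⁻¹ + b
  have key1 : ∀ a b : ℝ, ∫ y, (h y + a * (W y)⁻¹ + b) ∂μ
      = (∫ y, h y ∂μ) + a * (∫ y, (W y)⁻¹ ∂μ) + b * totalVol μ := by
    intro a b
    have i1 : Integrable (fun y => h y + a * (W y)⁻¹) μ := hh.add (intWinv.const_mul a)
    rw [integral_add i1 (integrable_const b), integral_add hh (intWinv.const_mul a),
      integral_const_mul, hconstint]
    ring
  have key2 : ∀ a b : ℝ, ∫ y, W y * (h y + a * (W y)⁻¹ + b) ∂μ
      = (∫ y, W y * h y ∂μ) + a * totalVol μ + b * (∫ y, W y ∂μ) := by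
    intro a b
    have heq : (fun y => W y * (h y + a * (W y)⁻¹ + b))
        = fun y => (W y * h y + a) + b * W y := by
      funext y
      field_simp [hWne y]
    have i1 : Integrable (fun y => W y * h y + a) μ := intWh.add (integrable_const a)
    rw [heq, integral_add i1 (intW.const_mul b), integral_add intWh (integrable_const a),
      integral_const_mul, hconstint]
    ring
  constructor
  · -- E (E⁻¹ h) = h
    have e1 : opEinv μ W h = fun y => h y
        + (2 * totalVol μ * (∫ y, W y * h y ∂μ) / ((∫ y, (W y)⁻¹ ∂μ) * (∫ y, W y ∂μ))
            - (∫ y, h y ∂μ) / (∫ y, (W y)⁻¹ ∂μ)) * (W y)⁻¹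
        + (-((∫ y, W y * h y ∂μ) / (∫ y, W y ∂μ))) := by
      funext y
      simp only [opEinv]
      ring
    have a1 : avg μ (opEinv μ W h) = (totalVol μ)⁻¹ * ((∫ y, h y ∂μ)
        + (2 * totalVol μ * (∫ y, W y * h y ∂μ) / ((∫ y, (W y)⁻¹ ∂μ) * (∫ y, W y ∂μ))
            - (∫ y, h y ∂μ) / (∫ y, (W y)⁻¹ ∂μ)) * (∫ y, (W y)⁻¹ ∂μ)
        + (-((∫ y, W y * h y ∂μ) / (∫ y, W y ∂μ))) * totalVol μ) := by
      rw [avg, e1, key1]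
    have a2 : avg μ (fun y => W y * opEinv μ W h y) = (totalVol μ)⁻¹ * ((∫ y, W y * h y ∂μ)
        + (2 * totalVol μ * (∫ y, W y * h y ∂μ) / ((∫ y, (W y)⁻¹ ∂μ) * (∫ y, W y ∂μ))
            - (∫ y, h y ∂μ) / (∫ y, (W y)⁻¹ ∂μ)) * totalVol μ
        + (-((∫ y, W y * h y ∂μ) / (∫ y, W y ∂μ))) * (∫ y, W y ∂μ)) := by
      rw [avg]
      rw [show (∫ x, W x * opEinv μ W h x ∂μ)
          = ∫ y, W y * (h y
            + (2 * totalVol μ * (∫ y, W y * h y ∂μ) / ((∫ y, (W y)⁻¹ ∂μ) * (∫ y, W y ∂μ))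
                - (∫ y, h y ∂μ) / (∫ y, (W y)⁻¹ ∂μ)) * (W y)⁻¹
            + (-((∫ y, W y * h y ∂μ) / (∫ y, W y ∂μ)))) ∂μ from by rw [e1], key2]
    simp only [opE]
    rw [a1, a2]
    simp only [e1]
    exact alg1 _ _ _ _ _ _ _ hVne hAne hBne (hWne x)
  · -- E⁻¹ (E h) = h
    have e2 : opE μ W h = fun y => h y
        + (-((totalVol μ)⁻¹ * (∫ y, W y * h y ∂μ))) * (W y)⁻¹
        + (totalVol μ)⁻¹ * (∫ y, h y ∂μ) := by
      funext y
      simp only [opE, avg]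
      ring
    have a1 : (∫ y, opE μ W h y ∂μ) = (∫ y, h y ∂μ)
        + (-((totalVol μ)⁻¹ * (∫ y, W y * h y ∂μ))) * (∫ y, (W y)⁻¹ ∂μ)
        + ((totalVol μ)⁻¹ * (∫ y, h y ∂μ)) * totalVol μ := by
      rw [show (∫ y, opE μ W h y ∂μ)
          = ∫ y, (h y
            + (-((totalVol μ)⁻¹ * (∫ y, W y * h y ∂μ))) * (W y)⁻¹
            + (totalVol μ)⁻¹ * (∫ y, h y ∂μ)) ∂μ from by rw [e2], key1]
    have a2 : (∫ y, W y * opE μ W h y ∂μ) = (∫ y, W y * h y ∂μ)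
        + (-((totalVol μ)⁻¹ * (∫ y, W y * h y ∂μ))) * totalVol μ
        + ((totalVol μ)⁻¹ * (∫ y, h y ∂μ)) * (∫ y, W y ∂μ) := by
      rw [show (∫ y, W y * opE μ W h y ∂μ)
          = ∫ y, W y * (h y
            + (-((totalVol μ)⁻¹ * (∫ y, W y * h y ∂μ))) * (W y)⁻¹
            + (totalVol μ)⁻¹ * (∫ y, h y ∂μ)) ∂μ from by rw [e2], key2]
    simp only [opEinv]
    rw [a1, a2]
    simp only [e2]
    exact alg2 _ _ _ _ _ _ _ hVne hAne hBne (hWne x)
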